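/- Let T be a finite set of tile types, k ≥ 2, and let top, bot, left, right be sequences of k colors. Then there exists a square tiling for (T, top, bot, left, right) if and only if the goal configuration c_goal = ((k+1,0),(k+1,1),…,(k+1,k+1)) is reachable in the square-reduction topologic graph G_sq with k+2 UAVs by an execution of length at most k+2. -/

import Mathlib

/-- A topologic graph: a finite set of regions with a base `B`, a move relation `→`
and a symmetric communication relation `⟷`, such that `B → B`. -/
structure TopGraph (V : Type) where
  base : V
  move : V → V → Prop
  comm : V → V → Prop
  comm_symm : ∀ v w : V, comm v w → comm w v
  base_move : move base base

namespace TopGraph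

variable {V : Type} {n : ℕ}

/-- The communication graph restricted to the occupied nodes together with the base is
connected: every occupied node is reachable from the base via communication edges whose
endpoints are occupied (or the base). -/
def ConnectedToBase (G : TopGraph V) (c : Fin n → V) : Prop :=
  ∀ i : Fin n,
    Relation.ReflTransGen
      (fun x y =>
        (x = G.base ∨ ∃ j, c j = x) ∧ (y = G.base ∨ ∃ j, c j = y) ∧ G.comm x y)
      G.base (c i)

/-- A configuration for `n` UAVs. -/
def IsConfig (G : TopGraph V) (c : Fin n → V) : Prop :=
  G.ConnectedToBase c ∧ ∀ i j : Fin n, i ≠ j → c i ≠ G.base → c i ≠ c j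

/-- An execution of length `ℓ` with `n` UAVs. -/
def IsExecution (G : TopGraph V) (n ℓ : ℕ) (d : ℕ → Fin n → V) : Prop :=
  (∀ t, t ≤ ℓ → G.IsConfig (d t)) ∧
  (∀ t, t < ℓ → ∀ i : Fin n, G.move (d t i) (d (t + 1) i))

/-- A covering execution: starts and ends with all UAVs at the base, and visits all nodes. -/
def IsCovering (G : TopGraph V) (n ℓ : ℕ) (d : ℕ → Fin n → V) : Prop :=
  G.IsExecution n ℓ d ∧
  (∀ i, d 0 i = G.base) ∧ (∀ i, d ℓ i = G.base) ∧
  (∀ v : V, ∃ t, t ≤ ℓ ∧ ∃ i, d t i = v)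

/-- A configuration is reachable if some execution from the all-base configuration ends in it. -/
def Reachable (G : TopGraph V) (c : Fin n → V) : Prop :=
  ∃ ℓ, ∃ d : ℕ → Fin n → V,
    G.IsExecution n ℓ d ∧ (∀ i, d 0 i = G.base) ∧ d ℓ = c

/-- Reachability by an execution of length at most `L`. -/
def ReachableIn (G : TopGraph V) (c : Fin n → V) (L : ℕ) : Prop :=
  ∃ ℓ, ℓ ≤ L ∧ ∃ d : ℕ → Fin n → V,
    G.IsExecution n ℓ d ∧ (∀ i, d 0 i = G.base) ∧ d ℓ = c

/-- Neighbor-communicable: if a UAV can move from `v` to `v'`, then `v` and `v'` can communicate. -/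
def NeighborCommunicable (G : TopGraph V) : Prop :=
  ∀ v w : V, G.move v w → G.comm v w

end TopGraph
/-- A tile type: four colors (naturals). -/
structure Tile where
  left : ℕ
  up : ℕ
  right : ℕ
  down : ℕ
deriving DecidableEq

/-- The color white. -/
def white : ℕ := 0
/-! The square-reduction topologic graph. Tile nodes `(t, i)` have column `i+1 ∈ {1,…,k}`
encoded by `i : Fin k`. Boundary nodes are pairs `(row, column) ∈ {0,…,k+1}²` with row or
column in `{0, k+1}`, encoded as a subtype of `Fin (k+2) × Fin (k+2)`. The base is `none`. -/

/-- Boundary nodes `Bd` of the square-reduction graph. -/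
abbrev SqBd (k : ℕ) : Type :=
  {p : Fin (k + 2) × Fin (k + 2) //
    p.1.val = 0 ∨ p.1.val = k + 1 ∨ p.2.val = 0 ∨ p.2.val = k + 1}

/-- Non-base nodes of the square-reduction graph. -/
abbrev SqInner (T : Finset Tile) (k : ℕ) : Type := ({t : Tile // t ∈ T} × Fin k) ⊕ SqBd k

/-- Nodes of the square-reduction graph (`none` is the base). -/
abbrev SqNode (T : Finset Tile) (k : ℕ) : Type := Option (SqInner T k)

/-- Moves of the square-reduction graph. -/
def sqMove (T : Finset Tile) (k : ℕ) (top bot : Fin k → ℕ) :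
    SqNode T k → SqNode T k → Prop := fun x y =>
  (x = none ∧ y = none) ∨
  (x = none ∧ ∃ b : SqBd k, y = some (Sum.inr b) ∧ b.val.1.val = 0) ∨
  (∃ q q' : {t : Tile // t ∈ T} × Fin k, x = some (Sum.inl q) ∧ y = some (Sum.inl q') ∧
    q.2 = q'.2 ∧ q.1.val.up = q'.1.val.down) ∨
  (∃ (b : SqBd k) (q : {t : Tile // t ∈ T} × Fin k), x = some (Sum.inr b) ∧
    y = some (Sum.inl q) ∧ b.val.1.val = 0 ∧ b.val.2.val = q.2.val + 1 ∧
    q.1.val.down = bot q.2) ∨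
  (∃ (q : {t : Tile // t ∈ T} × Fin k) (b : SqBd k), x = some (Sum.inl q) ∧
    y = some (Sum.inr b) ∧ b.val.1.val = k + 1 ∧ b.val.2.val = q.2.val + 1 ∧
    q.1.val.up = top q.2) ∨
  (∃ b b' : SqBd k, x = some (Sum.inr b) ∧ y = some (Sum.inr b') ∧
    b'.val.1.val = b.val.1.val + 1 ∧ b.val.2 = b'.val.2 ∧
    (b.val.2.val = 0 ∨ b.val.2.val = k + 1))

/-- One direction of the communications of the square-reduction graph. -/
def sqComm0 (T : Finset Tile) (k : ℕ) (lef rig : Fin k → ℕ) :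
    SqNode T k → SqNode T k → Prop := fun x y =>
  (x = none ∧ ∃ b : SqBd k, y = some (Sum.inr b) ∧ b.val.2.val = 0) ∨
  (∃ q q' : {t : Tile // t ∈ T} × Fin k, x = some (Sum.inl q) ∧ y = some (Sum.inl q') ∧
    q'.2.val = q.2.val + 1 ∧ q.1.val.right = q'.1.val.left) ∨
  (∃ b b' : SqBd k, x = some (Sum.inr b) ∧ y = some (Sum.inr b') ∧
    b.val.1 = b'.val.1 ∧ (b.val.1.val = 0 ∨ b.val.1.val = k + 1) ∧
    b'.val.2.val = b.val.2.val + 1) ∨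
  (∃ (b : SqBd k) (q : {t : Tile // t ∈ T} × Fin k) (jf : Fin k),
    x = some (Sum.inr b) ∧ y = some (Sum.inl q) ∧
    b.val.2.val = 0 ∧ b.val.1.val = jf.val + 1 ∧ q.2.val = 0 ∧ q.1.val.left = lef jf) ∨
  (∃ (b : SqBd k) (q : {t : Tile // t ∈ T} × Fin k) (jf : Fin k),
    x = some (Sum.inr b) ∧ y = some (Sum.inl q) ∧
    b.val.2.val = k + 1 ∧ b.val.1.val = jf.val + 1 ∧ q.2.val = k - 1 ∧ q.1.val.right = rig jf)

/-- The square-reduction topologic graph `G_sq`. -/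
def sqGraph (T : Finset Tile) (k : ℕ) (top bot lef rig : Fin k → ℕ) :
    TopGraph (SqNode T k) where
  base := none
  move := sqMove T k top bot
  comm := fun x y => sqComm0 T k lef rig x y ∨ sqComm0 T k lef rig y x
  comm_symm := fun _ _ h => h.symm
  base_move := Or.inl ⟨rfl, rfl⟩

/-- The goal configuration `((k+1,0), (k+1,1), …, (k+1,k+1))` for `k+2` UAVs. -/
def sqGoal (T : Finset Tile) (k : ℕ) : Fin (k + 2) → SqNode T k :=
  fun j => some (Sum.inr ⟨(⟨k + 1, by omega⟩, j), Or.inr (Or.inl rfl)⟩)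

/-- A square tiling of the `k × k` square (row `i+1` encoded by `i : Fin k`, bottom row
first; column `j+1` encoded by `j : Fin k`). -/
def IsSquareTiling (T : Finset Tile) (k : ℕ) (top bot lef rig : Fin k → ℕ)
    (lam : Fin k → Fin k → Tile) : Prop :=
  (∀ (i j : Fin k), lam i j ∈ T) ∧
  (∀ (i : Fin k) (j j' : Fin k), j'.val = j.val + 1 → (lam i j).right = (lam i j').left) ∧
  (∀ (i i' : Fin k) (j : Fin k), i'.val = i.val + 1 → (lam i j).up = (lam i' j).down) ∧
  (∀ (i j : Fin k), i.val = 0 → (lam i j).down = bot j) ∧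
  (∀ (i j : Fin k), i.val = k - 1 → (lam i j).up = top j) ∧
  (∀ (i j : Fin k), j.val = 0 → (lam i j).left = lef i) ∧
  (∀ (i j : Fin k), j.val = k - 1 → (lam i j).right = rig i)

/-! ### Auxiliary definitions and lemmas for the reduction proof -/

section Aux

variable {T : Finset Tile} {k : ℕ} {top bot lef rig : Fin k → ℕ}

/-- The column (shifted by one for tiles) of a node; `0` junk value for the base. -/
def colOf : SqNode T k → ℕ
  | none => 0
  | some (Sum.inl q) => q.2.val + 1
  | some (Sum.inr b) => b.val.2.val

/-- Extract the tile of a tile node (junk otherwise). -/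
def extractTile : SqNode T k → Tile
  | some (Sum.inl q) => q.1.val
  | _ => ⟨0, 0, 0, 0⟩

/-- `x` is a boundary node at row `r`, column `c`. -/
def atBd (x : SqNode T k) (r c : ℕ) : Prop :=
  ∃ b : SqBd k, x = some (Sum.inr b) ∧ b.val.1.val = r ∧ b.val.2.val = c

/-- `x` is a tile node at column index `i`. -/
def atTile (x : SqNode T k) (i : ℕ) : Prop :=
  ∃ q : {t : Tile // t ∈ T} × Fin k, x = some (Sum.inl q) ∧ q.2.val = i

lemma sqMove_none_right {x : SqNode T k} (h : sqMove T k top bot x none) : x = none := by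
  rcases h with ⟨hx, _⟩ | ⟨_, b, hy, _⟩ | ⟨q, q', _, hy, _⟩ | ⟨b, q, _, hy, _⟩ |
    ⟨q, b, _, hy, _⟩ | ⟨b, b', _, hy, _⟩ <;> first | exact hx | exact absurd hy (by simp)

lemma sqMove_col {x y : SqNode T k} (h : sqMove T k top bot x y) :
    x = none ∨ colOf y = colOf x := by
  rcases h with ⟨hx, hy⟩ | ⟨hx, b, hy, _⟩ | ⟨q, q', hx, hy, h2, _⟩ |
    ⟨b, q, hx, hy, _, h2, _⟩ | ⟨q, b, hx, hy, _, h2, _⟩ | ⟨b, b', hx, hy, _, h2, _⟩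
  · exact Or.inl hx
  · exact Or.inl hx
  · subst hx; subst hy; right; simp [colOf, h2]
  · subst hx; subst hy; right; simp [colOf, h2]
  · subst hx; subst hy; right; simp [colOf, h2]
  · subst hx; subst hy; right; simp [colOf, ← h2]

lemma sqMove_bd_pred {x : SqNode T k} {b' : SqBd k} {r : ℕ}
    (h : sqMove T k top bot x (some (Sum.inr b'))) (h1 : b'.val.1.val = r + 1)
    (h2 : b'.val.2.val = 0 ∨ b'.val.2.val = k + 1) :
    ∃ b : SqBd k, x = some (Sum.inr b) ∧ b.val.1.val = r ∧ b.val.2.val = b'.val.2.val := by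
  rcases h with ⟨hx, hy⟩ | ⟨hx, b, hy, hb⟩ | ⟨q, q', hx, hy, _, _⟩ |
    ⟨b, q, hx, hy, _⟩ | ⟨q, b, hx, hy, hb1, hb2, _⟩ | ⟨b, b'', hx, hy, hr, hc, _⟩
  · exact absurd hy (by simp)
  · obtain rfl : b' = b := by simpa using hy
    omega
  · exact absurd hy (by simp)
  · exact absurd hy (by simp)
  · obtain rfl : b' = b := by simpa using hy
    have := q.2.isLt; omega
  · obtain rfl : b' = b'' := by simpa using hy
    exact ⟨b, hx, by omega, by rw [hc]⟩

lemma sqMove_tile_pred {x : SqNode T k} {q : {t : Tile // t ∈ T} × Fin k}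
    (h : sqMove T k top bot x (some (Sum.inl q))) :
    (∃ q' : {t : Tile // t ∈ T} × Fin k, x = some (Sum.inl q') ∧ q'.2 = q.2 ∧
      q'.1.val.up = q.1.val.down) ∨
    (∃ b : SqBd k, x = some (Sum.inr b) ∧ b.val.1.val = 0 ∧
      b.val.2.val = q.2.val + 1 ∧ q.1.val.down = bot q.2) := by
  rcases h with ⟨hx, hy⟩ | ⟨hx, b, hy, hb⟩ | ⟨q1, q2, hx, hy, hc, hud⟩ |
    ⟨b, q1, hx, hy, hb1, hb2, hbot⟩ | ⟨q1, b, hx, hy, _⟩ | ⟨b, b'', hx, hy, _⟩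
  · exact absurd hy (by simp)
  · exact absurd hy (by simp)
  · obtain rfl : q = q2 := by simpa using hy
    exact Or.inl ⟨q1, hx, hc, hud⟩
  · obtain rfl : q = q1 := by simpa using hy
    exact Or.inr ⟨b, hx, hb1, hb2, hbot⟩
  · exact absurd hy (by simp)
  · exact absurd hy (by simp)

lemma sqMove_tile_bd {q : {t : Tile // t ∈ T} × Fin k} {b : SqBd k}
    (h : sqMove T k top bot (some (Sum.inl q)) (some (Sum.inr b))) :
    b.val.1.val = k + 1 ∧ b.val.2.val = q.2.val + 1 ∧ q.1.val.up = top q.2 := by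
  rcases h with ⟨hx, hy⟩ | ⟨hx, b', hy, hb⟩ | ⟨q1, q2, hx, hy, hc, hud⟩ |
    ⟨b', q1, hx, hy, _⟩ | ⟨q1, b', hx, hy, h1, h2, h3⟩ | ⟨b', b'', hx, hy, _⟩
  · exact absurd hx (by simp)
  · exact absurd hx (by simp)
  · exact absurd hy (by simp)
  · exact absurd hx (by simp)
  · obtain rfl : q = q1 := by simpa using hx
    obtain rfl : b = b' := by simpa using hy
    exact ⟨h1, h2, h3⟩
  · exact absurd hx (by simp)

lemma sqMove_none_tile {q : {t : Tile // t ∈ T} × Fin k}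
    (h : sqMove T k top bot none (some (Sum.inl q))) : False := by
  rcases sqMove_tile_pred h with ⟨q', hx, _⟩ | ⟨b, hx, _⟩ <;> simp at hx

end Aux



set_option maxHeartbeats 2000000 in
lemma main_lemma (T : Finset Tile) (k : ℕ) (hk : 2 ≤ k) (top bot lef rig : Fin k → ℕ)
    (l : ℕ) (d : ℕ → Fin (k + 2) → SqNode T k)
    (hconn : ∀ t ≤ l, (sqGraph T k top bot lef rig).ConnectedToBase (d t))
    (colInv' : ∀ (j : Fin (k + 2)) (t : ℕ), t ≤ l →
      d t j = none ∨ colOf (d t j) = j.val)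
    (r : ℕ) (hr1 : 1 ≤ r) (hrk : r ≤ k) (t : ℕ) (htl : t ≤ l)
    (bL bR : SqBd k)
    (hLe : d t ⟨0, by omega⟩ = some (Sum.inr bL))
    (hL1 : bL.val.1.val = r) (hL2 : bL.val.2.val = 0)
    (hRe : d t ⟨k + 1, by omega⟩ = some (Sum.inr bR))
    (hR1 : bR.val.1.val = r) (hR2 : bR.val.2.val = k + 1) :
    (∀ i, 1 ≤ i → i ≤ k → ∀ hi : i < k + 2, atTile (d t ⟨i, hi⟩) (i - 1)) ∧
    (∀ h1 : 1 < k + 2,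
      (extractTile (d t ⟨1, h1⟩)).left = lef ⟨r - 1, by omega⟩) ∧
    (∀ i, 1 ≤ i → i + 1 ≤ k → ∀ (hi : i < k + 2) (hi' : i + 1 < k + 2),
      (extractTile (d t ⟨i, hi⟩)).right =
        (extractTile (d t ⟨i + 1, hi'⟩)).left) ∧
    (∀ hK : k < k + 2,
      (extractTile (d t ⟨k, hK⟩)).right = rig ⟨r - 1, by omega⟩) := by
  set G := sqGraph T k top bot lef rig with hG
  have hcEq : ∀ (c : SqNode T k), (c = G.base ∨ ∃ m : Fin (k + 2), d t m = c) →
      c ≠ none → ∀ v, colOf c = v → ∀ hv : v < k + 2, d t ⟨v, hv⟩ = c := by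
    intro c hocc hne v hcol hv
    rcases hocc with h | ⟨m, hm⟩
    · exact absurd h hne
    · rcases colInv' m t htl with h1 | h1
      · rw [hm] at h1; exact absurd h1 hne
      · rw [hm] at h1
        rw [show (⟨v, hv⟩ : Fin (k + 2)) = m from Fin.ext (by show v = m.val; omega)]
        exact hm
  have Qind : ∀ x, Relation.ReflTransGen
      (fun x y => (x = G.base ∨ ∃ j, d t j = x) ∧
        (y = G.base ∨ ∃ j, d t j = y) ∧ G.comm x y) G.base x →
      (x = none ∨ d t ⟨0, by omega⟩ = x ∨
        (∃ (m : ℕ) (_ : 1 ≤ m) (h2 : m ≤ k), d t ⟨m, by omega⟩ = x ∧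
          (∀ i, 1 ≤ i → i ≤ m → ∀ hi : i < k + 2, atTile (d t ⟨i, hi⟩) (i - 1)) ∧
          (∀ h1 : 1 < k + 2,
            (extractTile (d t ⟨1, h1⟩)).left = lef ⟨r - 1, by omega⟩) ∧
          (∀ i, 1 ≤ i → i + 1 ≤ m → ∀ (hi : i < k + 2) (hi' : i + 1 < k + 2),
            (extractTile (d t ⟨i, hi⟩)).right =
              (extractTile (d t ⟨i + 1, hi'⟩)).left)) ∨
        (d t ⟨k + 1, by omega⟩ = x ∧
          (∀ i, 1 ≤ i → i ≤ k → ∀ hi : i < k + 2, atTile (d t ⟨i, hi⟩) (i - 1)) ∧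
          (∀ h1 : 1 < k + 2,
            (extractTile (d t ⟨1, h1⟩)).left = lef ⟨r - 1, by omega⟩) ∧
          (∀ i, 1 ≤ i → i + 1 ≤ k → ∀ (hi : i < k + 2) (hi' : i + 1 < k + 2),
            (extractTile (d t ⟨i, hi⟩)).right =
              (extractTile (d t ⟨i + 1, hi'⟩)).left) ∧
          (∀ hK : k < k + 2,
            (extractTile (d t ⟨k, hK⟩)).right = rig ⟨r - 1, by omega⟩))) := by
    intro x hx
    induction hx with
    | refl => exact Or.inl rfl
    | @tail b c hstep hE ih =>
      obtain ⟨hob, hoc, hcm⟩ := hE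
      have hcm' : sqComm0 T k lef rig b c ∨ sqComm0 T k lef rig c b := hcm
      by_cases hcn : c = none
      · exact Or.inl hcn
      rcases ih with hbnone | hbL | ⟨m, hm1, hmk, hbm, HTm, LCm, HCm⟩ |
        ⟨hbR, HTk, LCk, HCk, RCk⟩
      · -- b is the base
        subst hbnone
        rcases hcm' with (⟨hx1, bb, hy1, hbb⟩ | ⟨q, q', hx2, _⟩ | ⟨b1, b2, hx3, _⟩ |
          ⟨b1, q4, jf, hx4, _⟩ | ⟨b1, q5, jf, hx5, _⟩) |
          (⟨hx1, bb, hy1, _⟩ | ⟨q, q', hx2, hy2, _⟩ | ⟨b1, b2, hx3, hy3, _⟩ |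
          ⟨b1, q4, jf, hx4, hy4, _⟩ | ⟨b1, q5, jf, hx5, hy5, _⟩)
        · exact Or.inr (Or.inl (hcEq c hoc hcn 0 (by rw [hy1]; exact hbb) (by omega)))
        · exact absurd hx2 (by simp)
        · exact absurd hx3 (by simp)
        · exact absurd hx4 (by simp)
        · exact absurd hx5 (by simp)
        · exact absurd hx1 hcn
        · exact absurd hy2 (by simp)
        · exact absurd hy3 (by simp)
        · exact absurd hy4 (by simp)
        · exact absurd hy5 (by simp)
      · -- b is the left boundary node (r, 0)
        have hbLe : b = some (Sum.inr bL) := by rw [← hbL]; exact hLe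
        rcases hcm' with (⟨hx1, bb, hy1, hbb⟩ | ⟨q, q', hx2, _⟩ |
          ⟨b1, b2, hx3, hy3, he3, hio3, _⟩ |
          ⟨b1, q4, jf, hx4, hy4, h40, h4r, h4q, h4l⟩ |
          ⟨b1, q5, jf, hx5, hy5, h5k, _⟩) |
          (⟨hx1, bb, hy1, _⟩ | ⟨q, q', hx2, hy2, _⟩ |
          ⟨b1, b2, hx3, hy3, he3, hio3, _⟩ |
          ⟨b1, q4, jf, hx4, hy4, _⟩ | ⟨b1, q5, jf, hx5, hy5, _⟩)
        · rw [hbLe] at hx1; simp at hx1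
        · rw [hbLe] at hx2; simp at hx2
        · rw [hbLe] at hx3
          obtain rfl : bL = b1 := by simpa using hx3
          rcases hio3 with h | h <;> omega
        · -- the edge from the left boundary to the column-1 tile
          rw [hbLe] at hx4
          obtain rfl : bL = b1 := by simpa using hx4
          have hcd := hcEq c hoc hcn 1
            (by rw [hy4]; show q4.2.val + 1 = 1; omega) (by omega)
          refine Or.inr (Or.inr (Or.inl ⟨1, le_rfl, by omega, hcd, ?_, ?_, ?_⟩))
          · intro i h1 h2 hi
            obtain rfl : i = 1 := by omega
            refine ⟨q4, by rw [hcd]; exact hy4, by omega⟩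
          · intro h1
            have he : d t ⟨1, h1⟩ = some (Sum.inl q4) := by rw [hcd]; exact hy4
            rw [he]
            show q4.1.val.left = _
            rw [h4l, show jf = ⟨r - 1, by omega⟩ from Fin.ext (by show jf.val = r - 1; omega)]
          · intro i h1 h2
            exact absurd h2 (by omega)
        · rw [hbLe] at hx5
          obtain rfl : bL = b1 := by simpa using hx5
          exact absurd h5k (by omega)
        · exact absurd hx1 hcn
        · rw [hbLe] at hy2; simp at hy2
        · rw [hbLe] at hy3
          obtain rfl : bL = b2 := by simpa using hy3
          have := congrArg Fin.val he3
          rcases hio3 with h | h <;> omega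
        · rw [hbLe] at hy4; simp at hy4
        · rw [hbLe] at hy5; simp at hy5
      · -- b is the tile in column m
        have hbt : atTile b (m - 1) := by
          rw [← hbm]; exact HTm m hm1 le_rfl (by omega)
        obtain ⟨qm, hqm, hqm2⟩ := hbt
        rcases hcm' with (⟨hx1, bb, hy1, hbb⟩ |
          ⟨q, q', hx2, hy2, hadd2, hcol2⟩ | ⟨b1, b2, hx3, _⟩ |
          ⟨b1, q4, jf, hx4, _⟩ | ⟨b1, q5, jf, hx5, _⟩) |
          (⟨hx1, bb, hy1, _⟩ | ⟨q, q', hx2, hy2, hadd2, hcol2⟩ |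
          ⟨b1, b2, hx3, hy3, _⟩ |
          ⟨b1, q4, jf, hx4, hy4, h40, h4r, h4q, h4l⟩ |
          ⟨b1, q5, jf, hx5, hy5, h5k, h5r, h5q, h5c⟩)
        · rw [hqm] at hx1; simp at hx1
        · -- move right: tile m ⟷ tile m+1
          rw [hqm] at hx2
          obtain rfl : qm = q := by simpa using hx2
          have hq'lt := q'.2.isLt
          have hcd := hcEq c hoc hcn (m + 1)
            (by rw [hy2]; show q'.2.val + 1 = m + 1; omega) (by omega)
          refine Or.inr (Or.inr (Or.inl ⟨m + 1, by omega, by omega, hcd,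
            ?_, LCm, ?_⟩))
          · intro i h1 h2 hi
            rcases Nat.lt_or_ge i (m + 1) with h3 | h3
            · exact HTm i h1 (by omega) hi
            · obtain rfl : i = m + 1 := by omega
              exact ⟨q', by rw [hcd]; exact hy2, by omega⟩
          · intro i h1 h2 hi hi'
            rcases Nat.lt_or_ge (i + 1) (m + 1) with h3 | h3
            · exact HCm i h1 (by omega) hi hi'
            · obtain rfl : i = m := by omega
              have e1 : d t ⟨i, hi⟩ = some (Sum.inl qm) := by rw [hbm]; exact hqm
              have e2 : d t ⟨i + 1, hi'⟩ = some (Sum.inl q') := by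
                rw [hcd]; exact hy2
              rw [e1, e2]
              exact hcol2
        · rw [hqm] at hx3; simp at hx3
        · rw [hqm] at hx4; simp at hx4
        · rw [hqm] at hx5; simp at hx5
        · exact absurd hx1 hcn
        · -- move left: tile m-1 ⟷ tile m
          rw [hqm] at hy2
          obtain rfl : qm = q' := by simpa using hy2
          have hm2 : 2 ≤ m := by omega
          have hcd := hcEq c hoc hcn (m - 1)
            (by rw [hx2]; show q.2.val + 1 = m - 1; omega) (by omega)
          refine Or.inr (Or.inr (Or.inl ⟨m - 1, by omega, by omega, hcd,
            fun i h1 h2 hi => HTm i h1 (by omega) hi, LCm,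
            fun i h1 h2 hi hi' => HCm i h1 (by omega) hi hi'⟩))
        · rw [hqm] at hy3; simp at hy3
        · -- edge to the left boundary
          exact Or.inr (Or.inl (hcEq c hoc hcn 0 (by rw [hx4]; exact h40) (by omega)))
        · -- edge to the right boundary: column must be k
          rw [hqm] at hy5
          obtain rfl : qm = q5 := by simpa using hy5
          have hmk' : m = k := by omega
          have hcd := hcEq c hoc hcn (k + 1) (by rw [hx5]; exact h5k) (by omega)
          have hce : c = some (Sum.inr bR) := by rw [← hcd]; exact hRe
          rw [hce] at hx5
          obtain rfl : bR = b1 := by simpa using hx5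
          refine Or.inr (Or.inr (Or.inr ⟨hcd,
            fun i h1 h2 hi => HTm i h1 (by omega) hi, LCm,
            fun i h1 h2 hi hi' => HCm i h1 (by omega) hi hi', ?_⟩))
          intro hK
          have e1 : d t ⟨k, hK⟩ = some (Sum.inl qm) := by
            rw [show (⟨k, hK⟩ : Fin (k + 2)) = ⟨m, by omega⟩ from
              Fin.ext (by show k = m; omega), hbm]
            exact hqm
          rw [e1]
          show qm.1.val.right = _
          rw [h5c, show jf = ⟨r - 1, by omega⟩ from Fin.ext (by show jf.val = r - 1; omega)]
      · -- b is the right boundary node (r, k+1)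
        have hbRe : b = some (Sum.inr bR) := by rw [← hbR]; exact hRe
        rcases hcm' with (⟨hx1, bb, hy1, hbb⟩ | ⟨q, q', hx2, _⟩ |
          ⟨b1, b2, hx3, hy3, he3, hio3, _⟩ |
          ⟨b1, q4, jf, hx4, hy4, h40, _⟩ |
          ⟨b1, q5, jf, hx5, hy5, h5k, h5r, h5q, h5c⟩) |
          (⟨hx1, bb, hy1, _⟩ | ⟨q, q', hx2, hy2, _⟩ |
          ⟨b1, b2, hx3, hy3, he3, hio3, _⟩ |
          ⟨b1, q4, jf, hx4, hy4, _⟩ | ⟨b1, q5, jf, hx5, hy5, _⟩)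
        · rw [hbRe] at hx1; simp at hx1
        · rw [hbRe] at hx2; simp at hx2
        · rw [hbRe] at hx3
          obtain rfl : bR = b1 := by simpa using hx3
          rcases hio3 with h | h <;> omega
        · rw [hbRe] at hx4
          obtain rfl : bR = b1 := by simpa using hx4
          exact absurd h40 (by omega)
        · -- edge from the right boundary to the column-k tile
          rw [hbRe] at hx5
          obtain rfl : bR = b1 := by simpa using hx5
          have hcd := hcEq c hoc hcn k
            (by rw [hy5]; show q5.2.val + 1 = k; omega) (by omega)
          exact Or.inr (Or.inr (Or.inl ⟨k, by omega, le_rfl, hcd, HTk, LCk, HCk⟩))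
        · exact absurd hx1 hcn
        · rw [hbRe] at hy2; simp at hy2
        · rw [hbRe] at hy3
          obtain rfl : bR = b2 := by simpa using hy3
          have := congrArg Fin.val he3
          rcases hio3 with h | h <;> omega
        · rw [hbRe] at hy4; simp at hy4
        · rw [hbRe] at hy5; simp at hy5
  have hconnt := hconn t htl ⟨k + 1, by omega⟩
  have hQ := Qind (d t ⟨k + 1, by omega⟩) hconnt
  have hcR : colOf (d t ⟨k + 1, by omega⟩) = k + 1 := by rw [hRe]; exact hR2
  rcases hQ with h | h | ⟨m, hm1, hmk, hmd, _⟩ | ⟨_, HTk, LCk, HCk, RCk⟩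
  · rw [hRe] at h; simp at h
  · have hbe : (some (Sum.inr bL) : SqNode T k) = some (Sum.inr bR) := by
      rw [← hLe, ← hRe]; exact h
    obtain rfl : bL = bR := by simpa using hbe
    omega
  · have hsome : d t ⟨m, by omega⟩ = some (Sum.inr bR) := by rw [hmd]; exact hRe
    rcases colInv' ⟨m, by omega⟩ t htl with h1 | h1
    · rw [hsome] at h1; simp at h1
    · rw [hsome] at h1
      have h2 : bR.val.2.val = m := h1
      omega
  · exact ⟨HTk, LCk, HCk, RCk⟩

section Fwd

/-- The canonical execution witnessing the forward direction. -/
def fwdD (T : Finset Tile) (k : ℕ) (lam : Fin k → Fin k → Tile)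
    (hmem : ∀ i j, lam i j ∈ T) (t0 : ℕ) (j : Fin (k + 2)) : SqNode T k :=
  if h0 : min t0 (k + 2) = 0 then none
  else if hj : j.val = 0 ∨ j.val = k + 1 then
    some (Sum.inr ⟨(⟨min t0 (k + 2) - 1, by omega⟩, j), by
      rcases hj with h | h
      exacts [Or.inr (Or.inr (Or.inl h)), Or.inr (Or.inr (Or.inr h))]⟩)
  else if ht1 : min t0 (k + 2) = 1 then
    some (Sum.inr ⟨(⟨0, by omega⟩, j), Or.inl rfl⟩)
  else if ht2 : min t0 (k + 2) ≤ k + 1 then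
    some (Sum.inl (⟨lam ⟨min t0 (k + 2) - 2, by omega⟩
      ⟨j.val - 1, by rcases not_or.mp hj with ⟨h1, h2⟩; have := j.isLt; omega⟩,
      hmem _ _⟩, ⟨j.val - 1, by rcases not_or.mp hj with ⟨h1, h2⟩; have := j.isLt; omega⟩))
  else some (Sum.inr ⟨(⟨k + 1, by omega⟩, j), Or.inr (Or.inl rfl)⟩)

variable {T : Finset Tile} {k : ℕ} {lam : Fin k → Fin k → Tile}
  {hmem : ∀ i j, lam i j ∈ T}

lemma fwdD_zero (j : Fin (k + 2)) : fwdD T k lam hmem 0 j = none := by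
  rw [fwdD, dif_pos (by omega)]

lemma fwdD_side {t0 : ℕ} (ht : 1 ≤ t0) {j : Fin (k + 2)} (hj : j.val = 0 ∨ j.val = k + 1) :
    atBd (fwdD T k lam hmem t0 j) (min t0 (k + 2) - 1) j.val := by
  rw [fwdD, dif_neg (by omega), dif_pos hj]
  exact ⟨_, rfl, rfl, rfl⟩

lemma fwdD_one {j : Fin (k + 2)} (hj1 : 1 ≤ j.val) (hjk : j.val ≤ k) :
    atBd (fwdD T k lam hmem 1 j) 0 j.val := by
  rw [fwdD, dif_neg (by omega), dif_neg (by omega), dif_pos (by omega)]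
  exact ⟨_, rfl, rfl, rfl⟩

lemma fwdD_mid {t0 : ℕ} (h2 : 2 ≤ t0) (hk1 : t0 ≤ k + 1) {j : Fin (k + 2)}
    (hj1 : 1 ≤ j.val) (hjk : j.val ≤ k) :
    ∃ q : {x : Tile // x ∈ T} × Fin k, fwdD T k lam hmem t0 j = some (Sum.inl q) ∧
      q.2.val = j.val - 1 ∧
      ∀ (a b : Fin k), a.val = t0 - 2 → b.val = j.val - 1 → q.1.val = lam a b := by
  rw [fwdD, dif_neg (by omega), dif_neg (by omega), dif_neg (by omega), dif_pos (by omega)]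
  refine ⟨_, rfl, rfl, ?_⟩
  intro a b ha hb
  have ha' : a = ⟨min t0 (k + 2) - 2, by omega⟩ := Fin.ext (by simp [ha]; omega)
  have hb' : b = ⟨j.val - 1, by omega⟩ := Fin.ext (by simp [hb])
  rw [ha', hb']

lemma fwdD_top {t0 : ℕ} (ht : k + 2 ≤ t0) {j : Fin (k + 2)}
    (hj1 : 1 ≤ j.val) (hjk : j.val ≤ k) :
    atBd (fwdD T k lam hmem t0 j) (k + 1) j.val := by
  rw [fwdD, dif_neg (by omega), dif_neg (by omega), dif_neg (by omega), dif_neg (by omega)]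
  exact ⟨_, rfl, rfl, rfl⟩

end Fwd

set_option maxHeartbeats 4000000 in
/-- a square tiling for `(T, top, bot, left, right)` exists iff the goal
configuration `((k+1,0), …, (k+1,k+1))` is reachable in the square-reduction graph with
`k+2` UAVs by an execution of length at most `k+2`. -/
theorem square_tiling_iff_bounded_reachable (T : Finset Tile) (k : ℕ) (hk : 2 ≤ k)
    (top bot lef rig : Fin k → ℕ) :
    (∃ lam : Fin k → Fin k → Tile, IsSquareTiling T k top bot lef rig lam) ↔
    (sqGraph T k top bot lef rig).ReachableIn (sqGoal T k) (k + 2) := by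
  constructor
  · rintro ⟨lam, hmem, hhor, hver, hbot, htop, hlef, hrig⟩
    refine ⟨k + 2, le_rfl, fwdD T k lam hmem, ⟨?_, ?_⟩, fun i => fwdD_zero i, ?_⟩
    · -- configurations
      intro t ht
      constructor
      · -- connectivity
        rcases Nat.eq_zero_or_pos t with rfl | ht1
        · intro i
          rw [show fwdD T k lam hmem 0 i = (sqGraph T k top bot lef rig).base from
            fwdD_zero i]
        · -- t ≥ 1
          set G := sqGraph T k top bot lef rig with hG
          set d := fwdD T k lam hmem with hd
          have hocc : ∀ m (hm : m < k + 2),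
              (d t ⟨m, hm⟩ = G.base ∨ ∃ j, d t j = d t ⟨m, hm⟩) :=
            fun m hm => Or.inr ⟨⟨m, hm⟩, rfl⟩
          -- a middle node (1 ≤ m ≤ k) description
          have hmid : ∀ m (hm1 : 1 ≤ m) (hmk : m ≤ k),
              (t = 1 → atBd (d t ⟨m, by omega⟩) 0 m) ∧
              (∀ (h2 : 2 ≤ t) (h3 : t ≤ k + 1), ∃ q : {x : Tile // x ∈ T} × Fin k,
                d t ⟨m, by omega⟩ = some (Sum.inl q) ∧ q.2.val = m - 1 ∧
                ∀ (a b : Fin k), a.val = t - 2 → b.val = m - 1 → q.1.val = lam a b) ∧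
              (t = k + 2 → atBd (d t ⟨m, by omega⟩) (k + 1) m) := by
            intro m hm1 hmk
            refine ⟨fun h1 => ?_, fun h2 h3 => ?_, fun h4 => ?_⟩
            · subst h1; exact fwdD_one hm1 hmk
            · exact fwdD_mid h2 h3 hm1 hmk
            · subst h4; exact fwdD_top le_rfl hm1 hmk
          have hside : ∀ m (hm : m < k + 2) (h : m = 0 ∨ m = k + 1),
              atBd (d t ⟨m, hm⟩) (t - 1) m := by
            intro m hm h
            obtain ⟨b, hb, h1, h2⟩ := fwdD_side (lam := lam) (hmem := hmem) ht1 (j := ⟨m, hm⟩) h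
            exact ⟨b, hb, by omega, h2⟩
          have key : ∀ m (hm : m < k + 2),
              Relation.ReflTransGen (fun x y =>
                (x = G.base ∨ ∃ j, d t j = x) ∧ (y = G.base ∨ ∃ j, d t j = y) ∧
                G.comm x y) G.base (d t ⟨m, hm⟩) := by
            intro m
            induction m with
            | zero =>
              intro hm
              refine Relation.ReflTransGen.single ⟨Or.inl rfl, hocc 0 (by omega), ?_⟩
              obtain ⟨b, hb, h1, h2⟩ := hside 0 (by omega) (Or.inl rfl)
              exact Or.inl (Or.inl ⟨rfl, b, hb, h2⟩)
            | succ n ih =>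
              intro hm
              refine Relation.ReflTransGen.tail (ih (by omega)) ⟨hocc n (by omega),
                hocc (n + 1) (by omega), ?_⟩
              -- comm edge between column n and column n+1
              show sqComm0 T k lef rig _ _ ∨ sqComm0 T k lef rig _ _
              by_cases ht2 : 2 ≤ t ∧ t ≤ k + 1
              · obtain ⟨ht2a, ht2b⟩ := ht2
                rcases Nat.eq_zero_or_pos n with rfl | hn1
                · -- boundary (t-1,0) to tile column 0
                  obtain ⟨b, hb, hb1, hb2⟩ := hside 0 (by omega) (Or.inl rfl)
                  obtain ⟨q, hq, hq1, hq2⟩ := (hmid 1 le_rfl (by omega)).2.1 ht2a ht2b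
                  refine Or.inl (Or.inr (Or.inr (Or.inr (Or.inl
                    ⟨b, q, ⟨t - 2, by omega⟩, hb, hq, hb2, by simp; omega,
                      by omega, ?_⟩))))
                  rw [hq2 ⟨t - 2, by omega⟩ ⟨0, by omega⟩ rfl rfl]
                  exact hlef ⟨t - 2, by omega⟩ ⟨0, by omega⟩ rfl
                · rcases Nat.lt_or_ge n k with hnk | hnk
                  · -- tile col n-1 to tile col n
                    obtain ⟨q, hq, hq1, hq2⟩ := (hmid n hn1 (by omega)).2.1 ht2a ht2b
                    obtain ⟨q', hq', hq1', hq2'⟩ :=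
                      (hmid (n + 1) (by omega) (by omega)).2.1 ht2a ht2b
                    refine Or.inl (Or.inr (Or.inl ⟨q, q', hq, hq', by omega, ?_⟩))
                    rw [hq2 ⟨t - 2, by omega⟩ ⟨n - 1, by omega⟩ rfl rfl,
                      hq2' ⟨t - 2, by omega⟩ ⟨n, by omega⟩ rfl rfl]
                    exact hhor _ _ _ (show n = n - 1 + 1 by omega)
                  · -- tile col k-1 to boundary (t-1, k+1)
                    have hnk' : n = k := by omega
                    obtain ⟨q, hq, hq1, hq2⟩ := (hmid n hn1 (by omega)).2.1 ht2a ht2b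
                    obtain ⟨b, hb, hb1, hb2⟩ := hside (n + 1) (by omega)
                      (Or.inr (by omega))
                    refine Or.inr (Or.inr (Or.inr (Or.inr (Or.inr
                      ⟨b, q, ⟨t - 2, by omega⟩, hb, hq, by omega, by simp; omega,
                        by omega, ?_⟩))))
                    rw [hq2 ⟨t - 2, by omega⟩ ⟨k - 1, by omega⟩ rfl (by simp; omega)]
                    exact hrig ⟨t - 2, by omega⟩ ⟨k - 1, by omega⟩ rfl
              · -- t = 1 or t = k + 2 : all nodes on one boundary row
                have ht' : t = 1 ∨ t = k + 2 := by omega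
                have hrow : ∀ m (hm : m < k + 2), atBd (d t ⟨m, hm⟩) (t - 1) m := by
                  intro m hm
                  by_cases hm0 : m = 0 ∨ m = k + 1
                  · exact hside m hm hm0
                  · rcases ht' with rfl | rfl
                    · obtain ⟨b, hb, h1, h2⟩ := (hmid m (by omega) (by omega)).1 rfl
                      exact ⟨b, hb, by omega, h2⟩
                    · obtain ⟨b, hb, h1, h2⟩ := (hmid m (by omega) (by omega)).2.2 rfl
                      exact ⟨b, hb, by omega, h2⟩
                obtain ⟨b, hb, h1, h2⟩ := hrow n (by omega)
                obtain ⟨b', hb', h1', h2'⟩ := hrow (n + 1) hm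
                refine Or.inl (Or.inr (Or.inr (Or.inl
                  ⟨b, b', hb, hb', Fin.ext (by omega), by omega, by omega⟩)))
          intro i
          have := key i.1 i.2
          simpa using this
      · -- distinctness
        intro i j hij hne
        rcases Nat.eq_zero_or_pos t with rfl | ht1
        · exact absurd (fwdD_zero i) hne
        · have hcol : ∀ m : Fin (k + 2), colOf (fwdD T k lam hmem t m) = m.val := by
            intro m
            by_cases hm : m.val = 0 ∨ m.val = k + 1
            · obtain ⟨b, hb, h1, h2⟩ := fwdD_side (lam := lam) (hmem := hmem) ht1 hm
              rw [hb]; exact h2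
            · have hm1 : 1 ≤ m.val := by omega
              have hmk : m.val ≤ k := by have := m.isLt; omega
              rcases Nat.lt_or_ge t 2 with h2 | h2
              · have : t = 1 := by omega
                subst this
                obtain ⟨b, hb, h1, h2⟩ := fwdD_one (lam := lam) (hmem := hmem) hm1 hmk
                rw [hb]; exact h2
              · rcases Nat.lt_or_ge t (k + 2) with h3 | h3
                · obtain ⟨q, hq, h1, h2⟩ := fwdD_mid (lam := lam) (hmem := hmem) h2
                    (by omega) hm1 hmk
                  rw [hq]; show q.2.val + 1 = m.val; omega
                · obtain ⟨b, hb, h1, h2⟩ := fwdD_top (lam := lam) (hmem := hmem) h3 hm1 hmk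
                  rw [hb]; exact h2
          intro heq
          have : i.val = j.val := by
            rw [← hcol i, ← hcol j, heq]
          exact hij (Fin.ext this)
    · -- moves
      intro t ht j
      show sqMove T k top bot _ _
      by_cases hj : j.val = 0 ∨ j.val = k + 1
      · rcases Nat.eq_zero_or_pos t with rfl | ht1
        · rw [fwdD_zero]
          obtain ⟨b, hb, h1, h2⟩ := fwdD_side (lam := lam) (hmem := hmem) le_rfl (j := j) hj
          exact Or.inr (Or.inl ⟨rfl, b, hb, by omega⟩)
        · obtain ⟨b, hb, h1, h2⟩ := fwdD_side (lam := lam) (hmem := hmem) ht1 hj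
          obtain ⟨b', hb', h1', h2'⟩ := fwdD_side (lam := lam) (hmem := hmem)
            (t0 := t + 1) (by omega) hj
          exact Or.inr (Or.inr (Or.inr (Or.inr (Or.inr
            ⟨b, b', hb, hb', by omega, Fin.ext (by omega), by omega⟩))))
      · have hm1 : 1 ≤ j.val := by omega
        have hmk : j.val ≤ k := by have := j.isLt; omega
        rcases Nat.eq_zero_or_pos t with rfl | ht1
        · rw [fwdD_zero]
          obtain ⟨b, hb, h1, h2⟩ := fwdD_one (lam := lam) (hmem := hmem) (j := j) hm1 hmk
          exact Or.inr (Or.inl ⟨rfl, b, hb, h1⟩)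
        · by_cases ht2 : t = 1
          · subst ht2
            obtain ⟨b, hb, h1, h2⟩ := fwdD_one (lam := lam) (hmem := hmem) (j := j) hm1 hmk
            obtain ⟨q, hq, hq1, hq2⟩ := fwdD_mid (lam := lam) (hmem := hmem)
              (t0 := 2) le_rfl (by omega) hm1 hmk
            refine Or.inr (Or.inr (Or.inr (Or.inl ⟨b, q, hb, hq, h1, by omega, ?_⟩)))
            rw [hq2 ⟨0, by omega⟩ q.2 rfl hq1]
            exact hbot ⟨0, by omega⟩ q.2 rfl
          · by_cases ht3 : t ≤ k
            · obtain ⟨q, hq, hq1, hq2⟩ := fwdD_mid (lam := lam) (hmem := hmem)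
                (t0 := t) (by omega) (by omega) hm1 hmk
              obtain ⟨q', hq', hq1', hq2'⟩ := fwdD_mid (lam := lam) (hmem := hmem)
                (t0 := t + 1) (by omega) (by omega) hm1 hmk
              refine Or.inr (Or.inr (Or.inl ⟨q, q', hq, hq', Fin.ext (by omega), ?_⟩))
              rw [hq2 ⟨t - 2, by omega⟩ ⟨j.val - 1, by omega⟩ rfl rfl,
                hq2' ⟨t - 1, by omega⟩ ⟨j.val - 1, by omega⟩ rfl rfl]
              exact hver _ _ _ (show t - 1 = t - 2 + 1 by omega)
            · have ht4 : t = k + 1 := by omega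
              subst ht4
              obtain ⟨q, hq, hq1, hq2⟩ := fwdD_mid (lam := lam) (hmem := hmem)
                (t0 := k + 1) (by omega) le_rfl hm1 hmk
              obtain ⟨b, hb, h1, h2⟩ := fwdD_top (lam := lam) (hmem := hmem)
                (t0 := k + 2) le_rfl hm1 hmk
              refine Or.inr (Or.inr (Or.inr (Or.inr (Or.inl
                ⟨q, b, hq, hb, h1, by omega, ?_⟩))))
              rw [hq2 ⟨k - 1, by omega⟩ q.2 rfl hq1]
              exact htop ⟨k - 1, by omega⟩ q.2 rfl
    · -- final configuration is the goal
      funext j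
      have hgoal : atBd (fwdD T k lam hmem (k + 2) j) (k + 1) j.val := by
        by_cases hj : j.val = 0 ∨ j.val = k + 1
        · obtain ⟨b, hb, h1, h2⟩ := fwdD_side (lam := lam) (hmem := hmem)
            (t0 := k + 2) (by omega) hj
          exact ⟨b, hb, by omega, h2⟩
        · exact fwdD_top le_rfl (by omega) (by have := j.isLt; omega)
      obtain ⟨b, hb, h1, h2⟩ := hgoal
      rw [hb]
      show _ = some (Sum.inr (⟨(⟨k + 1, by omega⟩, j), Or.inr (Or.inl rfl)⟩ : SqBd k))
      congr 1
      congr 1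
      exact Subtype.ext (Prod.ext_iff.mpr ⟨Fin.ext h1, Fin.ext h2⟩)
  · rintro ⟨l, hl, d, ⟨hconf, hmov⟩, h0, hend⟩
    set G := sqGraph T k top bot lef rig with hG
    have hend' : ∀ j : Fin (k + 2), d l j = sqGoal T k j := fun j => by rw [hend]
    -- column invariant
    have colInv : ∀ (j : Fin (k + 2)) (s : ℕ),
        d (l - s) j = none ∨ colOf (d (l - s) j) = j.val := by
      intro j s
      induction s with
      | zero => right; rw [Nat.sub_zero, hend' j]; rfl
      | succ s ih =>
        rcases Nat.lt_or_ge l (s + 1) with h | h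
        · rw [show l - (s + 1) = l - s from by omega]; exact ih
        · have hm : sqMove T k top bot (d (l - (s + 1)) j) (d (l - (s + 1) + 1) j) :=
            hmov (l - (s + 1)) (by omega) j
          rw [show l - (s + 1) + 1 = l - s from by omega] at hm
          rcases ih with h1 | h1
          · rw [h1] at hm
            exact Or.inl (sqMove_none_right hm)
          · rcases sqMove_col hm with h2 | h2
            · exact Or.inl h2
            · right; rw [← h1, h2]
    have colInv' : ∀ (j : Fin (k + 2)) (t : ℕ), t ≤ l →
        d t j = none ∨ colOf (d t j) = j.val := by
      intro j t ht
      have := colInv j (l - t)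
      rwa [Nat.sub_sub_self ht] at this
    -- the side UAVs climb the boundary columns, one row per step
    have side : ∀ (j : Fin (k + 2)), (j.val = 0 ∨ j.val = k + 1) →
        ∀ s, s ≤ k + 1 → s ≤ l ∧ atBd (d (l - s) j) (k + 1 - s) j.val := by
      intro j hj s
      induction s with
      | zero =>
        intro _
        refine ⟨Nat.zero_le _, ?_⟩
        rw [Nat.sub_zero, hend' j]
        exact ⟨_, rfl, rfl, rfl⟩
      | succ s ih =>
        intro hs
        obtain ⟨hsl, b, hb, h1, h2⟩ := ih (by omega)
        have hslt : s < l := by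
          by_contra hc
          rw [show l - s = 0 from by omega, h0 j] at hb
          exact absurd (show (none : SqNode T k) = _ from hb) (by simp)
        have hm : sqMove T k top bot (d (l - (s + 1)) j) (d (l - (s + 1) + 1) j) :=
          hmov (l - (s + 1)) (by omega) j
        rw [show l - (s + 1) + 1 = l - s from by omega, hb] at hm
        obtain ⟨b', hb', h1', h2'⟩ := sqMove_bd_pred (r := k - s) hm (by omega)
          (by rcases hj with hj | hj
              exacts [Or.inl (by omega), Or.inr (by omega)])
        exact ⟨by omega, b', hb', by omega, by omega⟩
    have hl1 : k + 1 ≤ l := (side ⟨0, by omega⟩ (Or.inl rfl) (k + 1) le_rfl).1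
    set s0 := l - (k + 1) with hs0d
    have hs0 : s0 = 0 ∨ s0 = 1 := by omega
    have sideAt : ∀ (j : Fin (k + 2)), (j.val = 0 ∨ j.val = k + 1) →
        ∀ r, r ≤ k + 1 → atBd (d (s0 + r) j) r j.val := by
      intro j hj r hr
      have h := (side j hj (k + 1 - r) (by omega)).2
      rw [show l - (k + 1 - r) = s0 + r from by omega,
        show k + 1 - (k + 1 - r) = r from by omega] at h
      exact h
    -- main claim: at time s0 + r (1 ≤ r ≤ k) all middle UAVs sit on a matching row of tiles
    have main : ∀ r (hr1 : 1 ≤ r) (hrk : r ≤ k),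
        (∀ i, 1 ≤ i → i ≤ k → ∀ hi : i < k + 2, atTile (d (s0 + r) ⟨i, hi⟩) (i - 1)) ∧
        (∀ h1 : 1 < k + 2,
          (extractTile (d (s0 + r) ⟨1, h1⟩)).left = lef ⟨r - 1, by omega⟩) ∧
        (∀ i, 1 ≤ i → i + 1 ≤ k → ∀ (hi : i < k + 2) (hi' : i + 1 < k + 2),
          (extractTile (d (s0 + r) ⟨i, hi⟩)).right =
            (extractTile (d (s0 + r) ⟨i + 1, hi'⟩)).left) ∧
        (∀ hK : k < k + 2,
          (extractTile (d (s0 + r) ⟨k, hK⟩)).right = rig ⟨r - 1, by omega⟩) := by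
      intro r hr1 hrk
      obtain ⟨bR, hRe, hR1, hR2⟩ :=
        sideAt ⟨k + 1, by omega⟩ (Or.inr rfl) r (by omega)
      obtain ⟨bL, hLe, hL1, hL2⟩ := sideAt ⟨0, by omega⟩ (Or.inl rfl) r (by omega)
      exact main_lemma T k hk top bot lef rig l d (fun t ht => (hconf t ht).1)
        colInv' r hr1 hrk (s0 + r) (by omega) bL bR hLe hL1 hL2 hRe hR1 hR2
    -- the execution must have full length: s0 = 1
    have hs01 : s0 = 1 := by
      rcases hs0 with h | h
      · exfalso
        have hma := (main 1 le_rfl (by omega)).1 1 le_rfl (by omega) (by omega)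
        rw [show s0 + 1 = 1 from by omega] at hma
        obtain ⟨q, hq, _⟩ := hma
        have hm0 : sqMove T k top bot (d 0 ⟨1, by omega⟩) (d (0 + 1) ⟨1, by omega⟩) :=
          hmov 0 (by omega) _
        rw [h0, show (0 : ℕ) + 1 = 1 from rfl, hq] at hm0
        exact sqMove_none_tile hm0
      · exact h
    have hlval : l = k + 2 := by omega
    -- the tiles occupied at each time and column
    have tileAt : ∀ (i j : Fin k), ∃ q : {x : Tile // x ∈ T} × Fin k,
        d (i.val + 2) ⟨j.val + 1, by omega⟩ = some (Sum.inl q) ∧ q.2.val = j.val := by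
      intro i j
      have hik := i.isLt
      have hjk := j.isLt
      have h := (main (i.val + 1) (by omega) (by omega)).1 (j.val + 1) (by omega)
        (by omega) (by omega)
      rw [show s0 + (i.val + 1) = i.val + 2 from by omega] at h
      obtain ⟨q, hq, hq2⟩ := h
      exact ⟨q, hq, by omega⟩
    refine ⟨fun i j => extractTile (d (i.val + 2) ⟨j.val + 1, by omega⟩),
      ?_, ?_, ?_, ?_, ?_, ?_, ?_⟩
    · -- membership
      intro i j
      obtain ⟨q, hq, _⟩ := tileAt i j
      show extractTile _ ∈ T
      rw [hq]
      exact q.1.2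
    · -- horizontal matching
      intro i j j' hjj'
      obtain ⟨jv', hlt'⟩ := j'
      have hj' : jv' = j.val + 1 := hjj'
      subst hj'
      have hik := i.isLt
      have hc := (main (i.val + 1) (by omega) (by omega)).2.2.1 (j.val + 1) (by omega)
        (by omega) (by omega) (by omega)
      rw [show s0 + (i.val + 1) = i.val + 2 from by omega] at hc
      exact hc
    · -- vertical matching
      intro i i' j hii'
      obtain ⟨iv', hlt'⟩ := i'
      have hi' : iv' = i.val + 1 := hii'
      subst hi'
      obtain ⟨qa, hqa, hqa2⟩ := tileAt i j
      obtain ⟨qb, hqb, hqb2⟩ := tileAt ⟨i.val + 1, hlt'⟩ j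
      have hm : sqMove T k top bot (d (i.val + 2) ⟨j.val + 1, by omega⟩)
          (d ((⟨i.val + 1, hlt'⟩ : Fin k).val + 2) ⟨j.val + 1, by omega⟩) :=
        hmov (i.val + 2) (by omega) _
      rw [hqa, hqb] at hm
      rcases sqMove_tile_pred hm with ⟨q', hx, hq'2, hud⟩ | ⟨b, hx, _⟩
      · obtain rfl : qa = q' := by simpa using hx
        show (extractTile _).up = (extractTile _).down
        rw [hqa, hqb]
        exact hud
      · simp at hx
    · -- bottom colors
      intro i j hi0
      obtain ⟨iv, hlt⟩ := i
      have hi0' : iv = 0 := hi0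
      subst hi0'
      obtain ⟨qa, hqa, hqa2⟩ := tileAt ⟨0, hlt⟩ j
      have hm : sqMove T k top bot (d 1 ⟨j.val + 1, by omega⟩)
          (d ((⟨0, hlt⟩ : Fin k).val + 2) ⟨j.val + 1, by omega⟩) :=
        hmov 1 (by omega) _
      rw [hqa] at hm
      rcases sqMove_tile_pred hm with ⟨q', hx, _, _⟩ | ⟨b, hx, hb1, hb2, hbq⟩
      · exfalso
        have hm0 : sqMove T k top bot (d 0 ⟨j.val + 1, by omega⟩)
            (d 1 ⟨j.val + 1, by omega⟩) := hmov 0 (by omega) _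
        rw [h0, hx] at hm0
        exact sqMove_none_tile hm0
      · show (extractTile _).down = _
        rw [hqa]
        show qa.1.val.down = _
        rw [hbq, show qa.2 = j from Fin.ext hqa2]
    · -- top colors
      intro i j hik1
      obtain ⟨iv, hlt⟩ := i
      have hik1' : iv = k - 1 := hik1
      subst hik1'
      obtain ⟨qa, hqa, hqa2⟩ := tileAt ⟨k - 1, hlt⟩ j
      have hg : d (k + 2) ⟨j.val + 1, by omega⟩ = sqGoal T k ⟨j.val + 1, by omega⟩ := by
        have hgen2 : ∀ s, s = l →
            d s ⟨j.val + 1, by omega⟩ = sqGoal T k ⟨j.val + 1, by omega⟩ := by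
          intro s hs
          subst hs
          exact hend' _
        exact hgen2 (k + 2) (by omega)
      have hm : sqMove T k top bot (d ((⟨k - 1, hlt⟩ : Fin k).val + 2) ⟨j.val + 1, by omega⟩)
          (d (k + 2) ⟨j.val + 1, by omega⟩) := by
        have := hmov (k + 1) (by omega) (⟨j.val + 1, by omega⟩ : Fin (k + 2))
        rw [show (⟨k - 1, hlt⟩ : Fin k).val + 2 = k + 1 from by omega]
        exact this
      rw [hqa, hg] at hm
      have hm' : sqMove T k top bot (some (Sum.inl qa))
          (some (Sum.inr (⟨(⟨k + 1, by omega⟩, ⟨j.val + 1, by omega⟩),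
            Or.inr (Or.inl rfl)⟩ : SqBd k))) := hm
      obtain ⟨_, _, hup⟩ := sqMove_tile_bd hm'
      show (extractTile _).up = _
      rw [hqa]
      show qa.1.val.up = _
      rw [hup, show qa.2 = j from Fin.ext hqa2]
    · -- left colors
      intro i j hj0
      obtain ⟨jv, hltj⟩ := j
      have hj0' : jv = 0 := hj0
      subst hj0'
      have hik := i.isLt
      have hc := (main (i.val + 1) (by omega) (by omega)).2.1 (by omega)
      rw [show s0 + (i.val + 1) = i.val + 2 from by omega] at hc
      have : (⟨i.val + 1 - 1, by omega⟩ : Fin k) = i :=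
        Fin.ext (by show i.val + 1 - 1 = i.val; omega)
      rw [this] at hc
      exact hc
    · -- right colors
      intro i j hjk1
      obtain ⟨jv, hltj⟩ := j
      have hjk1' : jv = k - 1 := hjk1
      subst hjk1'
      have hik := i.isLt
      have hc := (main (i.val + 1) (by omega) (by omega)).2.2.2 (by omega)
      rw [show s0 + (i.val + 1) = i.val + 2 from by omega] at hc
      have he : (⟨i.val + 1 - 1, by omega⟩ : Fin k) = i :=
        Fin.ext (by show i.val + 1 - 1 = i.val; omega)
      rw [he] at hc
      have hgen : ∀ (X : Fin (k + 2)), X.val = k →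
          (extractTile (d (i.val + 2) X)).right = rig i := by
        intro X hX
        rw [show X = ⟨k, by omega⟩ from Fin.ext hX]
        exact hc
      exact hgen _ (by show k - 1 + 1 = k; omega)
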